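/- Let q be a nonzero element of a field K that is not a root of unity, let Λ = K[X_1^{±1},...,X_m^{±1}] be a Laurent polynomial ring, and let ℤ^m act on Λ by δ^i · X_j = q^{-δ_{ij}} X_j (extended to algebra automorphisms). This action is faithful, and the monoid ℤ^m is K-separating on the invariant field for the natural W-action in the sense that distinct elements of ℤ^m restrict to distinct maps on the subfield generated by the power sums X_1^2 + ... + X_m^2. -/

import Mathlib

/-- The action of `v ∈ ℤ^m` on the Laurent polynomial algebra
`Λ = K[X_1^{±1},…,X_m^{±1}]` (realized as `AddMonoidAlgebra K (Fin m → ℤ)`), scaling the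
monomial `X^e` by `q^{-⟨v,e⟩}`. -/
noncomputable def laurentScalingAction (K : Type*) [Field K] (q : K) (m : ℕ)
    (v : Fin m → ℤ) (f : AddMonoidAlgebra K (Fin m → ℤ)) :
    AddMonoidAlgebra K (Fin m → ℤ) :=
  AddMonoidAlgebra.ofCoeff (f.coeff.sum fun e c => Finsupp.single e (q ^ (-(∑ i, v i * e i)) * c))

lemma zpow_inj_aux {K : Type*} [Field K] {q : K} (hq0 : q ≠ 0)
    (hq : ∀ k : ℕ, 0 < k → q ^ k ≠ 1) {a b : ℤ} (h : q ^ a = q ^ b) : a = b := by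
  have hn : q ^ (a - b) = 1 := by
    rw [zpow_sub₀ hq0, h, div_self (zpow_ne_zero _ hq0)]
  by_contra hne
  have hab : a - b ≠ 0 := sub_ne_zero.mpr hne
  have hpos : 0 < (a - b).natAbs := Int.natAbs_pos.mpr hab
  have h1 : q ^ ((a - b).natAbs : ℤ) = 1 := by
    rcases Int.natAbs_eq (a - b) with he | he
    · rw [← he, hn]
    · have : q ^ (-((a - b).natAbs : ℤ)) = 1 := by rw [← he, hn]
      rw [zpow_neg] at this
      rw [← inv_inv (q ^ ((a - b).natAbs : ℤ)), this, inv_one]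
  rw [zpow_natCast] at h1
  exact hq _ hpos h1

theorem laurent_action_faithful_and_separating (K : Type*) [Field K] (q : K)
    (hq0 : q ≠ 0) (hq : ∀ k : ℕ, 0 < k → q ^ k ≠ 1) (m : ℕ) :
    Function.Injective (laurentScalingAction K q m) ∧
    ∀ v w : Fin m → ℤ,
      laurentScalingAction K q m v
          (∑ i : Fin m, AddMonoidAlgebra.ofCoeff (Finsupp.single (Pi.single i 2 : Fin m → ℤ) (1 : K))) =
        laurentScalingAction K q m w
          (∑ i : Fin m, AddMonoidAlgebra.ofCoeff (Finsupp.single (Pi.single i 2 : Fin m → ℤ) (1 : K))) →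
      v = w := by
  have key : ∀ (v : Fin m → ℤ) (e : Fin m → ℤ),
      laurentScalingAction K q m v (AddMonoidAlgebra.ofCoeff (Finsupp.single e (1 : K))) =
        AddMonoidAlgebra.ofCoeff (Finsupp.single e (q ^ (-(∑ i, v i * e i)))) := by
    intro v e
    unfold laurentScalingAction
    rw [AddMonoidAlgebra.coeff_ofCoeff, Finsupp.sum_single_index (by simp), mul_one]
  have hsum : ∀ (v : Fin m → ℤ),
      laurentScalingAction K q m v
          (∑ i : Fin m, AddMonoidAlgebra.ofCoeff (Finsupp.single (Pi.single i 2 : Fin m → ℤ) (1 : K))) =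
        ∑ i : Fin m, AddMonoidAlgebra.ofCoeff (Finsupp.single (Pi.single i 2 : Fin m → ℤ) (q ^ (-(2 * v i)))) := by
    intro v
    unfold laurentScalingAction
    rw [← AddMonoidAlgebra.ofCoeff_sum, AddMonoidAlgebra.coeff_ofCoeff]
    rw [← Finsupp.sum_finset_sum_index (by simp) (by intros; rw [mul_add, Finsupp.single_add])]
    rw [AddMonoidAlgebra.ofCoeff_sum]
    refine Finset.sum_congr rfl fun i _ => ?_
    rw [Finsupp.sum_single_index (by simp), mul_one]
    congr 2
    rw [Finset.sum_eq_single i (fun j _ hj => by simp [Pi.single_apply, hj])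
      (by simp)]
    simp [mul_comm]
  constructor
  · intro v w h
    funext i
    have h1 := congrArg (fun φ => φ (AddMonoidAlgebra.ofCoeff (Finsupp.single (Pi.single i 1 : Fin m → ℤ) (1 : K))))
      h
    simp only [key] at h1
    have h2 := congrArg (fun f : AddMonoidAlgebra K (Fin m → ℤ) =>
      f.coeff (Pi.single i 1)) h1
    simp only [AddMonoidAlgebra.coeff_ofCoeff, Finsupp.single_eq_same] at h2
    have hexp : ∀ u : Fin m → ℤ, (∑ j, u j * (Pi.single i 1 : Fin m → ℤ) j) = u i := by
      intro u
      rw [Finset.sum_eq_single i (fun j _ hj => by simp [Pi.single_apply, hj]) (by simp)]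
      simp
    rw [hexp, hexp] at h2
    have := zpow_inj_aux hq0 hq h2
    omega
  · intro v w h
    funext i
    rw [hsum, hsum] at h
    have h2 := congrArg (fun f : AddMonoidAlgebra K (Fin m → ℤ) =>
      f.coeff (Pi.single i 2)) h
    have heval : ∀ c : Fin m → K,
        (∑ j : Fin m, AddMonoidAlgebra.ofCoeff (Finsupp.single (Pi.single j 2 : Fin m → ℤ) (c j))).coeff
          (Pi.single i 2 : Fin m → ℤ) = c i := by
      intro c
      rw [← AddMonoidAlgebra.ofCoeff_sum, AddMonoidAlgebra.coeff_ofCoeff]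
      rw [Finsupp.finset_sum_apply]
      rw [Finset.sum_eq_single i (fun j _ hj => ?_) (by simp)]
      · simp
      · rw [Finsupp.single_apply, if_neg]
        intro hcontra
        have := congrFun hcontra j
        simp [Pi.single_apply, hj] at this
    simp only [heval] at h2
    have := zpow_inj_aux hq0 hq h2
    omega
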